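/- Let A = (a_{ij}) be a real nonnegative matrix (possibly with infinite index sets) such that the number of distinct values among its entries is at most k. Then rank_psd A ≤ C(rank A + k − 1, k − 1). -/

import Mathlib

open Finset

private lemma outerPSD {m : Type*} [Fintype m] (b : m → ℝ) :
    Matrix.PosSemidef (Matrix.of fun p q => b p * b q) := by
  rw [Matrix.posSemidef_iff_dotProduct_mulVec]
  constructor
  · ext p q
    simp [Matrix.conjTranspose, mul_comm]
  · intro x
    have h1 : dotProduct (star x) ((Matrix.of fun p q => b p * b q).mulVec x)
        = (∑ p, b p * x p) * (∑ q, b q * x q) := by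
      rw [Finset.sum_mul_sum]
      simp only [dotProduct, Matrix.mulVec, Matrix.of_apply, Pi.star_apply,
        star_trivial, Finset.mul_sum]
      exact Finset.sum_congr rfl fun p _ => Finset.sum_congr rfl fun q _ => by ring
    rw [h1]
    exact mul_self_nonneg _

private lemma extend_mul_sum {T : Type*} [Fintype T] {N : ℕ} (ι : T ↪ Fin N) (g h : T → ℝ) :
    ∑ p, Function.extend ι g 0 p * Function.extend ι h 0 p = ∑ σ, g σ * h σ := by
  classical
  have key : ∀ p : Fin N, Function.extend ι g 0 p * Function.extend ι h 0 p
      = Function.extend ι (fun σ => g σ * h σ) 0 p := by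
    intro p
    rcases em (∃ σ, ι σ = p) with ⟨σ, rfl⟩ | hp
    · rw [ι.injective.extend_apply, ι.injective.extend_apply, ι.injective.extend_apply]
    · rw [Function.extend_apply' _ _ _ hp, Function.extend_apply' _ _ _ hp,
        Function.extend_apply' _ _ _ hp]
      simp
  rw [Finset.sum_congr rfl fun p _ => key p]
  have h1 : ∑ p ∈ Finset.univ.map ι, Function.extend ι (fun σ => g σ * h σ) 0 p
      = ∑ σ, g σ * h σ := by
    rw [Finset.sum_map]
    exact Finset.sum_congr rfl fun σ _ => ι.injective.extend_apply _ _ _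
  rw [← h1]
  refine (Finset.sum_subset (Finset.subset_univ _) fun p _ hp => ?_).symm
  refine Function.extend_apply' _ _ _ ?_
  rintro ⟨σ, rfl⟩
  exact hp (Finset.mem_map.mpr ⟨σ, Finset.mem_univ σ, rfl⟩)

private lemma cardT (n k : ℕ) (hk : 0 < k) :
    Fintype.card (Σ d : Fin k, Sym (Fin n) d) ≤ (n + k - 1).choose (k - 1) := by
  rw [Fintype.card_sigma]
  have h1 : ∀ d : Fin k, Fintype.card (Sym (Fin n) (d : ℕ)) = (n + d - 1).choose d := by
    intro d
    rw [Sym.card_sym_eq_choose, Fintype.card_fin]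
  simp_rw [h1]
  rw [Fin.sum_univ_eq_sum_range (fun d => (n + d - 1).choose d)]
  rcases n with _ | m
  · have h2 : ∑ d ∈ range k, (0 + d - 1).choose d = 1 := by
      rw [Finset.sum_eq_single_of_mem 0 (Finset.mem_range.mpr hk)]
      · simp
      · intro d _ hd
        exact Nat.choose_eq_zero_of_lt (by omega)
    rw [h2]
    rw [Nat.zero_add, Nat.choose_self]
  · obtain ⟨K, rfl⟩ : ∃ K, k = K + 1 := ⟨k - 1, by omega⟩
    have h2 : ∀ d ∈ range (K + 1), (m + 1 + d - 1).choose d = (d + m).choose m := by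
      intro d _
      have h : m + 1 + d - 1 = d + m := by omega
      rw [h, Nat.choose_symm_add]
    rw [Finset.sum_congr rfl h2, Nat.sum_range_add_choose K m]
    have h3 : m + 1 + (K + 1) - 1 = m + 1 + K := by omega
    have h4 : K + 1 - 1 = K := by omega
    rw [h3, h4]
    have h5 : K + m + 1 = m + 1 + K := by omega
    rw [h5, Nat.choose_symm_add]

theorem stmt11 {I J : Type*} (n k : ℕ) (hk : 0 < k) (a : I → J → ℝ)
    (hnonneg : ∀ i j, 0 ≤ a i j)
    (S : Finset ℝ) (hS : S.card ≤ k) (hval : ∀ i j, a i j ∈ S)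
    (u : I → Fin n → ℝ) (v : J → Fin n → ℝ)
    (ha : ∀ i j, a i j = ∑ t, u i t * v j t) :
    ∃ (U : I → Matrix (Fin ((n + k - 1).choose (k - 1))) (Fin ((n + k - 1).choose (k - 1))) ℝ)
      (V : J → Matrix (Fin ((n + k - 1).choose (k - 1))) (Fin ((n + k - 1).choose (k - 1))) ℝ),
      (∀ i, (U i).PosSemidef) ∧ (∀ j, (V j).PosSemidef) ∧
      ∀ i j, a i j = ∑ p, ∑ q, U i p q * V j p q := by
  classical
  set N := (n + k - 1).choose (k - 1) with hN
  set f : Polynomial ℝ := Lagrange.interpolate S id (fun x => Real.sqrt x) with hf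
  have hinj : Set.InjOn id (S : Set ℝ) := Function.injective_id.injOn
  have hfeval : ∀ x ∈ S, f.eval x = Real.sqrt x := by
    intro x hx
    simpa [hf] using Lagrange.eval_interpolate_at_node (fun x => Real.sqrt x) hinj hx
  have hdeg : f.natDegree < k := by
    rcases eq_or_ne f 0 with h0 | h0
    · simpa [h0] using hk
    · rw [Polynomial.natDegree_lt_iff_degree_lt h0]
      exact lt_of_lt_of_le (Lagrange.degree_interpolate_lt _ hinj) (by exact_mod_cast hS)
  set L : I → MvPolynomial (Fin n) ℝ :=
    fun i => ∑ t, MvPolynomial.C (u i t) * MvPolynomial.X t with hL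
  set q : I → MvPolynomial (Fin n) ℝ :=
    fun i => ∑ d ∈ range k, MvPolynomial.C (f.coeff d) * (L i) ^ d with hq
  have hLdeg : ∀ i, (L i).totalDegree ≤ 1 := by
    intro i
    refine (MvPolynomial.totalDegree_finset_sum _ _).trans (Finset.sup_le fun t _ => ?_)
    refine (MvPolynomial.totalDegree_mul _ _).trans ?_
    simp [MvPolynomial.totalDegree_C, MvPolynomial.totalDegree_X]
  have hqdeg : ∀ i, (q i).totalDegree < k := by
    intro i
    refine lt_of_le_of_lt (MvPolynomial.totalDegree_finset_sum _ _) ?_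
    rw [Finset.sup_lt_iff (by exact_mod_cast hk)]
    intro d hd
    refine lt_of_le_of_lt (MvPolynomial.totalDegree_mul _ _) ?_
    have h6 : (L i ^ d).totalDegree ≤ d * 1 :=
      (MvPolynomial.totalDegree_pow _ _).trans (Nat.mul_le_mul_left d (hLdeg i))
    have hd' : d < k := Finset.mem_range.mp hd
    simp only [MvPolynomial.totalDegree_C, zero_add]
    omega
  have hqeval : ∀ i j, MvPolynomial.eval (v j) (q i) = f.eval (a i j) := by
    intro i j
    have hLe : MvPolynomial.eval (v j) (L i) = ∑ t, u i t * v j t := by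
      simp [hL]
    rw [hq]
    simp only [map_sum, map_mul, map_pow, MvPolynomial.eval_C, hLe, ← ha i j]
    exact (Polynomial.eval_eq_sum_range' hdeg (a i j)).symm
  set T := (Σ d : Fin k, Sym (Fin n) d) with hT
  set mono : T → (Fin n →₀ ℕ) := fun σ => Multiset.toFinsupp (σ.2 : Multiset (Fin n)) with hmono
  have hmono_inj : Function.Injective mono := by
    rintro ⟨d1, s1⟩ ⟨d2, s2⟩ h
    have hs : (s1 : Multiset (Fin n)) = (s2 : Multiset (Fin n)) :=
      Multiset.toFinsupp.injective h
    have hd : (d1 : ℕ) = (d2 : ℕ) := by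
      have h2 := congrArg Multiset.card hs
      rwa [Sym.card_coe, Sym.card_coe] at h2
    have hd2 : d1 = d2 := Fin.ext hd
    subst hd2
    exact Sigma.ext rfl (heq_of_eq (Sym.coe_injective hs))
  have hcover : ∀ i, ∀ m ∈ (q i).support, ∃ σ : T, mono σ = m := by
    intro i m hm
    have hms : (m.sum fun _ e => e) < k :=
      lt_of_le_of_lt (MvPolynomial.le_totalDegree hm) (hqdeg i)
    have hcard : Multiset.card (Finsupp.toMultiset m) = m.sum fun _ e => e := by
      rw [Finsupp.card_toMultiset]; rfl
    refine ⟨⟨⟨Multiset.card (Finsupp.toMultiset m), by omega⟩, ⟨Finsupp.toMultiset m, rfl⟩⟩, ?_⟩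
    simp [hmono, Finsupp.toMultiset_toFinsupp]
  have hsumT : ∀ i j, ∑ σ : T,
      MvPolynomial.coeff (mono σ) (q i) * ∏ t, v j t ^ (mono σ) t = Real.sqrt (a i j) := by
    intro i j
    rw [← hfeval _ (hval i j), ← hqeval i j, MvPolynomial.eval_eq']
    rw [← Finset.sum_image (s := Finset.univ) (g := mono)
      (f := fun m : Fin n →₀ ℕ => MvPolynomial.coeff m (q i) * ∏ t, v j t ^ m t)
      (fun x _ y _ h => hmono_inj h)]
    refine (Finset.sum_subset ?_ ?_).symm
    · intro m hm
      obtain ⟨σ, hσ⟩ := hcover i m hm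
      exact Finset.mem_image.mpr ⟨σ, Finset.mem_univ σ, hσ⟩
    · intro m _ hm
      rw [MvPolynomial.notMem_support_iff.mp hm, zero_mul]
  obtain ⟨ι⟩ : Nonempty (T ↪ Fin N) := by
    refine Function.Embedding.nonempty_of_card_le ?_
    rw [Fintype.card_fin]
    exact cardT n k hk
  refine ⟨fun i => Matrix.of fun p p' =>
      Function.extend ι (fun σ => MvPolynomial.coeff (mono σ) (q i)) 0 p *
      Function.extend ι (fun σ => MvPolynomial.coeff (mono σ) (q i)) 0 p',
    fun j => Matrix.of fun p p' =>
      Function.extend ι (fun σ => ∏ t, v j t ^ (mono σ) t) 0 p *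
      Function.extend ι (fun σ => ∏ t, v j t ^ (mono σ) t) 0 p',
    fun i => outerPSD _, fun j => outerPSD _, ?_⟩
  intro i j
  simp only [Matrix.of_apply]
  set Bv : Fin N → ℝ := Function.extend ι (fun σ => MvPolynomial.coeff (mono σ) (q i)) 0 with hBv
  set Cv : Fin N → ℝ := Function.extend ι (fun σ => ∏ t, v j t ^ (mono σ) t) 0 with hCv
  have hkey : ∑ p, Bv p * Cv p = Real.sqrt (a i j) := by
    rw [hBv, hCv, extend_mul_sum]
    exact hsumT i j
  have hsq : ∑ p, ∑ p', (Bv p * Bv p') * (Cv p * Cv p')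
      = (∑ p, Bv p * Cv p) * (∑ p, Bv p * Cv p) := by
    rw [Finset.sum_mul_sum]
    exact Finset.sum_congr rfl fun p _ => Finset.sum_congr rfl fun p' _ => by ring
  rw [hsq, hkey]
  exact (Real.mul_self_sqrt (hnonneg i j)).symm
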